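/- Suppose n > 500, d₁, d₂ ∈ {0,…,9} with d₁ ≠ d₂ and d₁ > 0, and ℓ₁, ℓ₂ ≥ 1 satisfy P_n = (1/9)(d₁·10^{ℓ₁+ℓ₂} − (d₁ − d₂)·10^{ℓ₂} − d₂). Then |9·a·α^n − d₁·10^{ℓ₁+ℓ₂}| < 30·10^{ℓ₂}, and consequently |(9a/d₁)·α^n·10^{−ℓ₁−ℓ₂} − 1| < 30/10^{ℓ₁}. -/

import Mathlib

/-- The Padovan sequence: `P 0 = 0`, `P 1 = 1`, `P 2 = 1`, `P (n+3) = P (n+1) + P n`. -/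
def padovan : ℕ → ℕ
  | 0 => 0
  | 1 => 1
  | 2 => 1
  | n + 3 => padovan (n + 1) + padovan n

set_option maxHeartbeats 2000000 in
/-- If `n > 500` and `P n = (1/9)(d₁·10^(ℓ₁+ℓ₂) − (d₁−d₂)·10^ℓ₂ − d₂)` with distinct
digits `d₁ ≠ d₂`, `d₁ > 0`, `ℓ₁, ℓ₂ ≥ 1`, then
`|9·a·α^n − d₁·10^(ℓ₁+ℓ₂)| < 30·10^ℓ₂` and
`|(9a/d₁)·α^n·10^(−ℓ₁−ℓ₂) − 1| < 30/10^ℓ₁`. -/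
theorem first_linear_form_bound
    (α a : ℝ) (hα : α ^ 3 = α + 1)
    (β γ : ℂ) (hβ : β ^ 3 = β + 1) (hβim : β.im ≠ 0) (hγ : γ = starRingEnd ℂ β)
    (ha : (a : ℂ) = ((α : ℂ) + 1) / (((α : ℂ) - β) * ((α : ℂ) - γ)))
    (n d₁ d₂ ℓ₁ ℓ₂ : ℕ) (hn : 500 < n)
    (hd₁ : d₁ ≤ 9) (hd₂ : d₂ ≤ 9) (hne : d₁ ≠ d₂) (hd₁pos : 0 < d₁)
    (hℓ₁ : 1 ≤ ℓ₁) (hℓ₂ : 1 ≤ ℓ₂)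
    (heq : (9 : ℤ) * (padovan n : ℤ) =
      (d₁ : ℤ) * 10 ^ (ℓ₁ + ℓ₂) - ((d₁ : ℤ) - (d₂ : ℤ)) * 10 ^ ℓ₂ - (d₂ : ℤ)) :
    |9 * a * α ^ n - (d₁ : ℝ) * 10 ^ (ℓ₁ + ℓ₂)| < 30 * 10 ^ ℓ₂ ∧
      |9 * a / (d₁ : ℝ) * α ^ n * (10 : ℝ) ^ (-(ℓ₁ : ℤ) - (ℓ₂ : ℤ)) - 1| <
        30 / 10 ^ ℓ₁ := by
  -- real root estimates
  have hα1 : 1.3 < α := by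
    nlinarith [sq_nonneg (α - 1.3), sq_nonneg (α + 1.3), sq_nonneg α, sq_nonneg (α + 1)]
  have hα2 : α < 1.33 := by
    nlinarith [sq_nonneg (α - 1.33), sq_nonneg (α + 1.33), sq_nonneg α, sq_nonneg (α + 1)]
  obtain ⟨A, hA⟩ : ∃ A : ℂ, A = (α : ℂ) := ⟨_, rfl⟩
  rw [← hA] at ha
  have hA3 : A ^ 3 = A + 1 := by
    rw [hA]; exact_mod_cast congrArg (fun x : ℝ => (x : ℂ)) hα
  have hγ3 : γ ^ 3 = γ + 1 := by
    rw [hγ, ← map_pow, hβ]; simp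
  have hβγ : β ≠ γ := by
    intro h
    exact hβim ((Complex.conj_eq_iff_im).mp (by rw [← hγ, ← h]))
  have hAβ : A ≠ β := by
    intro h; apply hβim; rw [← h]; simp [hA]
  have hAγ : A ≠ γ := by
    intro h; apply hβim
    have : γ.im = 0 := by rw [← h]; simp [hA]
    rw [hγ] at this; simpa using this
  -- Vieta-style relations
  have hq : β ^ 2 + A * β + A ^ 2 - 1 = 0 := by
    have h1 : (β - A) * (β ^ 2 + A * β + A ^ 2 - 1) = 0 := by linear_combination hβ - hA3
    rcases mul_eq_zero.mp h1 with h | h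
    · exact absurd (sub_eq_zero.mp h).symm hAβ
    · exact h
  have hqγ : γ ^ 2 + A * γ + A ^ 2 - 1 = 0 := by
    have h1 : (γ - A) * (γ ^ 2 + A * γ + A ^ 2 - 1) = 0 := by linear_combination hγ3 - hA3
    rcases mul_eq_zero.mp h1 with h | h
    · exact absurd (sub_eq_zero.mp h).symm hAγ
    · exact h
  have hsum : A + β + γ = 0 := by
    have h1 : (β - γ) * (A + β + γ) = 0 := by linear_combination hq - hqγ
    rcases mul_eq_zero.mp h1 with h | h
    · exact absurd (sub_eq_zero.mp h) hβγ
    · exact h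
  have hprod : β * γ = A ^ 2 - 1 := by linear_combination β * hsum - hq
  -- conjugation facts
  have hconjβ : starRingEnd ℂ β = γ := hγ.symm
  have hconjγ : starRingEnd ℂ γ = β := by rw [hγ]; simp
  have hconjA : starRingEnd ℂ A = A := by rw [hA]; exact Complex.conj_ofReal α
  -- norms
  have hnβ : Complex.normSq β = α ^ 2 - 1 := by
    have : ((Complex.normSq β : ℝ) : ℂ) = ((α ^ 2 - 1 : ℝ) : ℂ) := by
      rw [← Complex.mul_conj, hconjβ, hprod, hA]; push_cast; ring
    exact_mod_cast this
  have hnβA : Complex.normSq (β - A) = 3 * α ^ 2 - 1 := by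
    have : ((Complex.normSq (β - A) : ℝ) : ℂ) = ((3 * α ^ 2 - 1 : ℝ) : ℂ) := by
      rw [← Complex.mul_conj, map_sub, hconjβ, hconjA]
      push_cast
      rw [hA] at hsum hprod ⊢
      linear_combination hprod - (α : ℂ) * hsum
    exact_mod_cast this
  have hnβγ : Complex.normSq (β - γ) = 3 * α ^ 2 - 4 := by
    have : ((Complex.normSq (β - γ) : ℝ) : ℂ) = ((3 * α ^ 2 - 4 : ℝ) : ℂ) := by
      rw [← Complex.mul_conj, map_sub, hconjβ, hconjγ]
      push_cast
      rw [hA] at hsum hprod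
      linear_combination 4 * hprod - (β + γ - (α : ℂ)) * hsum
    exact_mod_cast this
  have hnβ1 : Complex.normSq (β + 1) = α ^ 2 - α := by
    have : ((Complex.normSq (β + 1) : ℝ) : ℂ) = ((α ^ 2 - α : ℝ) : ℂ) := by
      rw [← Complex.mul_conj, map_add, hconjβ, map_one]
      push_cast
      rw [hA] at hsum hprod
      linear_combination hprod + hsum
    exact_mod_cast this
  have habsβ : ‖β‖ ≤ 0.88 := by
    have h1 : (‖β‖) ^ 2 = α ^ 2 - 1 := by rw [Complex.sq_norm, hnβ]
    nlinarith [norm_nonneg β]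
  have habsβA : 1 ≤ ‖β - A‖ := by
    have h1 : (‖β - A‖) ^ 2 = 3 * α ^ 2 - 1 := by rw [Complex.sq_norm, hnβA]
    nlinarith [norm_nonneg (β - A)]
  have habsβγ : 1 ≤ ‖β - γ‖ := by
    have h1 : (‖β - γ‖) ^ 2 = 3 * α ^ 2 - 4 := by rw [Complex.sq_norm, hnβγ]
    nlinarith [norm_nonneg (β - γ)]
  have habsβ1 : ‖β + 1‖ ≤ 2 := by
    have h1 : (‖β + 1‖) ^ 2 = α ^ 2 - α := by rw [Complex.sq_norm, hnβ1]
    nlinarith [norm_nonneg (β + 1)]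
  -- Binet coefficients
  obtain ⟨b, hb⟩ : ∃ b : ℂ, b = (β + 1) / ((β - A) * (β - γ)) := ⟨_, rfl⟩
  obtain ⟨c, hc⟩ : ∃ c : ℂ, c = (γ + 1) / ((γ - A) * (γ - β)) := ⟨_, rfl⟩
  have dAβ : A - β ≠ 0 := sub_ne_zero.mpr hAβ
  have dAγ : A - γ ≠ 0 := sub_ne_zero.mpr hAγ
  have dβA : β - A ≠ 0 := sub_ne_zero.mpr (Ne.symm hAβ)
  have dβγ : β - γ ≠ 0 := sub_ne_zero.mpr hβγ
  have dγA : γ - A ≠ 0 := sub_ne_zero.mpr (Ne.symm hAγ)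
  have dγβ : γ - β ≠ 0 := sub_ne_zero.mpr (Ne.symm hβγ)
  have base0 : (a : ℂ) + b + c = 0 := by
    rw [ha, hb, hc]; field_simp; ring
  have base1 : (a : ℂ) * A + b * β + c * γ = 1 := by
    rw [ha, hb, hc]; field_simp; ring
  have base2 : (a : ℂ) * A ^ 2 + b * β ^ 2 + c * γ ^ 2 = 1 := by
    have h : (a : ℂ) * A ^ 2 + b * β ^ 2 + c * γ ^ 2 = 1 + (A + β + γ) := by
      rw [ha, hb, hc]; field_simp; ring
    rw [h, hsum, add_zero]
  have binet : ∀ m, ((padovan m : ℕ) : ℂ) = (a : ℂ) * A ^ m + b * β ^ m + c * γ ^ m := by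
    intro m
    induction m using Nat.strong_induction_on with
    | _ m ih =>
      match m with
      | 0 => simpa [padovan] using base0.symm
      | 1 => simpa [padovan] using base1.symm
      | 2 => simpa [padovan] using base2.symm
      | (k + 3) =>
        have i1 := ih (k + 1) (by omega)
        have i0 := ih k (by omega)
        rw [show padovan (k + 3) = padovan (k + 1) + padovan k from rfl]
        push_cast
        rw [i1, i0]
        linear_combination (-((a : ℂ) * A ^ k)) * hA3 - (b * β ^ k) * hβ - (c * γ ^ k) * hγ3
  -- bounds on the coefficients
  have habsb : ‖b‖ ≤ 2 := by
    rw [hb, norm_div, norm_mul]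
    have h9 : (1 : ℝ) * 1 ≤ ‖β - A‖ * ‖β - γ‖ :=
      mul_le_mul habsβA habsβγ (by norm_num) (norm_nonneg _)
    have hpos : (0 : ℝ) < ‖β - A‖ * ‖β - γ‖ := by linarith
    rw [div_le_iff₀ hpos]
    linarith
  have hcb : c = starRingEnd ℂ b := by
    rw [hb, hc, map_div₀, map_mul, map_sub, map_sub, map_add, map_one, hconjβ, hconjA, hconjγ]
  have habsc : ‖c‖ = ‖b‖ := by rw [hcb, Complex.norm_conj]
  have habsγ : ‖γ‖ = ‖β‖ := by rw [hγ, Complex.norm_conj]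
  -- the distance from padovan n to a α^n
  have hclose : |9 * (padovan n : ℝ) - 9 * a * α ^ n| < 1 := by
    have e1 : (((padovan n : ℝ) - a * α ^ n : ℝ) : ℂ) = b * β ^ n + c * γ ^ n := by
      push_cast
      rw [binet n, hA]
      push_cast
      ring
    have e2 : |(padovan n : ℝ) - a * α ^ n| ≤ 4 * (‖β‖) ^ n := by
      have := congrArg (fun z : ℂ => ‖z‖) e1
      rw [Complex.norm_real, Real.norm_eq_abs] at this
      rw [this]
      calc ‖b * β ^ n + c * γ ^ n‖
          ≤ ‖b * β ^ n‖ + ‖c * γ ^ n‖ := norm_add_le _ _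
        _ = ‖b‖ * (‖β‖) ^ n + ‖c‖ * (‖γ‖) ^ n := by
            rw [norm_mul, norm_mul, norm_pow, norm_pow]
        _ ≤ 4 * (‖β‖) ^ n := by
            rw [habsc, habsγ]
            nlinarith [pow_nonneg (norm_nonneg β) n]
    have e3 : (‖β‖) ^ n ≤ (0.88 : ℝ) ^ 40 := by
      calc (‖β‖) ^ n ≤ (0.88 : ℝ) ^ n :=
            pow_le_pow_left₀ (norm_nonneg β) habsβ n
        _ ≤ (0.88 : ℝ) ^ 40 :=
            pow_le_pow_of_le_one (by norm_num) (by norm_num) (by omega)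
    have e4 : (36 : ℝ) * (0.88 : ℝ) ^ 40 < 1 := by norm_num
    calc |9 * (padovan n : ℝ) - 9 * a * α ^ n|
        = |9 * ((padovan n : ℝ) - a * α ^ n)| := by congr 1; ring
      _ = 9 * |(padovan n : ℝ) - a * α ^ n| := by rw [abs_mul]; norm_num
      _ < 1 := by nlinarith
  -- final arithmetic
  have heqR : 9 * (padovan n : ℝ) =
      (d₁ : ℝ) * 10 ^ (ℓ₁ + ℓ₂) - ((d₁ : ℝ) - (d₂ : ℝ)) * 10 ^ ℓ₂ - (d₂ : ℝ) := by
    exact_mod_cast heq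
  have h10₂ : (10 : ℝ) ≤ 10 ^ ℓ₂ := by
    calc (10 : ℝ) = 10 ^ 1 := by norm_num
    _ ≤ 10 ^ ℓ₂ := pow_le_pow_right₀ (by norm_num) hℓ₂
  have hp2 : (0 : ℝ) < 10 ^ ℓ₂ := by positivity
  have hd₁R : (1 : ℝ) ≤ (d₁ : ℝ) := by exact_mod_cast hd₁pos
  have hd₁R9 : (d₁ : ℝ) ≤ 9 := by exact_mod_cast hd₁
  have hd₂R9 : (d₂ : ℝ) ≤ 9 := by exact_mod_cast hd₂
  have hd₂R0 : (0 : ℝ) ≤ (d₂ : ℝ) := by positivity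
  obtain ⟨hc1, hc2⟩ := abs_lt.mp hclose
  have goal1 : |9 * a * α ^ n - (d₁ : ℝ) * 10 ^ (ℓ₁ + ℓ₂)| < 30 * 10 ^ ℓ₂ := by
    rw [abs_lt]
    constructor <;> nlinarith [hp2, h10₂]
  refine ⟨goal1, ?_⟩
  have hz : (10 : ℝ) ^ (-(ℓ₁ : ℤ) - (ℓ₂ : ℤ)) = ((10 : ℝ) ^ (ℓ₁ + ℓ₂))⁻¹ := by
    rw [show (-(ℓ₁ : ℤ) - (ℓ₂ : ℤ)) = -((ℓ₁ + ℓ₂ : ℕ) : ℤ) by push_cast; ring,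
      zpow_neg, zpow_natCast]
  have hT : (0 : ℝ) < (d₁ : ℝ) * 10 ^ (ℓ₁ + ℓ₂) := by positivity
  have hkey : 9 * a / (d₁ : ℝ) * α ^ n * ((10 : ℝ) ^ (ℓ₁ + ℓ₂))⁻¹ - 1 =
      (9 * a * α ^ n - (d₁ : ℝ) * 10 ^ (ℓ₁ + ℓ₂)) / ((d₁ : ℝ) * 10 ^ (ℓ₁ + ℓ₂)) := by
    have h1 : (d₁ : ℝ) ≠ 0 := by positivity
    have h2 : ((10 : ℝ) ^ (ℓ₁ + ℓ₂)) ≠ 0 := by positivity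
    field_simp
  rw [hz, hkey, abs_div, abs_of_pos hT, div_lt_iff₀ hT]
  have hrw : 30 / (10 : ℝ) ^ ℓ₁ * ((d₁ : ℝ) * 10 ^ (ℓ₁ + ℓ₂)) = 30 * (d₁ : ℝ) * 10 ^ ℓ₂ := by
    rw [pow_add]
    have h2 : ((10 : ℝ) ^ ℓ₁) ≠ 0 := by positivity
    field_simp
  rw [hrw]
  nlinarith [goal1, abs_nonneg (9 * a * α ^ n - (d₁ : ℝ) * 10 ^ (ℓ₁ + ℓ₂))]
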